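/- On S^{p-1}(r₁) × S^{p-1}(r₂) × S^{q-1}(r₃), the induced operator P satisfies P²X = X − Σ_{α=1}^{3} ⟨X, ξ_α⟩ ξ_α for every tangent vector X, verifying property (2.3)(i) with ε = 1 in codimension 3. -/
import Mathlib


open scoped RealInnerProductSpace

noncomputable section

/-- Euclidean space ℝ^n. -/
abbrev Ep (n : ℕ) : Type := EuclideanSpace ℝ (Fin n)

/-- The almost product structure `P̃(x,y,z) = (y, x, ε • z)` on `ℝ^p × ℝ^p × ℝ^q`. -/
def Pt (p q : ℕ) (ε : ℝ) : Ep p × Ep p × Ep q → Ep p × Ep p × Ep q :=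
  fun v => (v.2.1, v.1, ε • v.2.2)

/-- The standard (product / Euclidean) inner product on the triple space. -/
def ip3 {p q : ℕ} (u v : Ep p × Ep p × Ep q) : ℝ :=
  ⟪u.1, v.1⟫ + ⟪u.2.1, v.2.1⟫ + ⟪u.2.2, v.2.2⟫

set_option maxHeartbeats 2000000 in
theorem stmt_18 (p q : ℕ) (hp : 0 < p) (hq : 0 < q) (ε : ℝ) (hε : ε = 1 ∨ ε = -1)
    (r₁ r₂ r₃ : ℝ) (h₁ : 0 < r₁) (h₂ : 0 < r₂) (h₃ : 0 < r₃)
    (r : ℝ) (hr : r = Real.sqrt (r₁ ^ 2 + r₂ ^ 2))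
    (R : ℝ) (hR : R = Real.sqrt (r ^ 2 + r₃ ^ 2))
    (x y : Ep p) (z : Ep q) (hx : ‖x‖ = r₁) (hy : ‖y‖ = r₂) (hz : ‖z‖ = r₃)
    (σ : ℝ) (hσ : σ = ⟪x, y⟫)
    (P : Ep p × Ep p × Ep q → Ep p × Ep p × Ep q)
    (hP : P = fun v => ((v.2.1 - (⟪x, v.2.1⟫ / r₁ ^ 2) • x,
        v.1 - (⟪y, v.1⟫ / r₂ ^ 2) • y, ε • v.2.2) : Ep p × Ep p × Ep q))
    (ξ₁ ξ₂ ξ₃ : Ep p × Ep p × Ep q)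
    (hξ₁ : ξ₁ = (1 / R) • ((y - (σ / r₁ ^ 2) • x, x - (σ / r₂ ^ 2) • y, (0 : Ep q)) :
        Ep p × Ep p × Ep q))
    (hξ₂ : ξ₂ = (r₃ / (r * R)) • ((y - (σ / r₁ ^ 2) • x, x - (σ / r₂ ^ 2) • y, (0 : Ep q)) :
        Ep p × Ep p × Ep q))
    (hξ₃ : ξ₃ = (1 / r) • (((σ / (r₁ * r₂)) • x - (r₁ / r₂) • y,
        (r₂ / r₁) • x - (σ / (r₁ * r₂)) • y, (0 : Ep q)) : Ep p × Ep p × Ep q))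
    (X₁ Y₁ : Ep p) (Z₁ : Ep q)
    (ht1 : ⟪x, X₁⟫ = 0) (ht2 : ⟪y, Y₁⟫ = 0) (ht3 : ⟪z, Z₁⟫ = 0)
    (X : Ep p × Ep p × Ep q) (hX : X = ((X₁, Y₁, Z₁) : Ep p × Ep p × Ep q)) :
    P (P X) = X - ip3 X ξ₁ • ξ₁ - ip3 X ξ₂ • ξ₂ - ip3 X ξ₃ • ξ₃ := by
  have rpos : 0 < r := by rw [hr]; positivity
  have Rpos : 0 < R := by rw [hR]; positivity
  have hr2 : r ^ 2 = r₁ ^ 2 + r₂ ^ 2 := by rw [hr]; exact Real.sq_sqrt (by positivity)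
  have hR2 : R ^ 2 = r ^ 2 + r₃ ^ 2 := by rw [hR]; exact Real.sq_sqrt (by positivity)
  have hε2 : ε ^ 2 = 1 := by rcases hε with h | h <;> rw [h] <;> ring
  have ht1' : ⟪X₁, x⟫ = 0 := by rw [real_inner_comm]; exact ht1
  have ht2' : ⟪Y₁, y⟫ = 0 := by rw [real_inner_comm]; exact ht2
  obtain ⟨a, ha⟩ : ∃ t : ℝ, t = ⟪y, X₁⟫ := ⟨_, rfl⟩
  obtain ⟨b, hb⟩ : ∃ t : ℝ, t = ⟪x, Y₁⟫ := ⟨_, rfl⟩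
  have hc1 : ⟪X₁, y⟫ = a := by rw [real_inner_comm, ha]
  have hc2 : ⟪Y₁, x⟫ = b := by rw [real_inner_comm, hb]
  have hc3 : ⟪y, x⟫ = σ := by rw [real_inner_comm, hσ]
  have hxx : ⟪x, x⟫ = r₁ ^ 2 := by rw [real_inner_self_eq_norm_sq, hx]
  have hyy : ⟪y, y⟫ = r₂ ^ 2 := by rw [real_inner_self_eq_norm_sq, hy]
  have hr1 : (r₁ : ℝ) ≠ 0 := ne_of_gt h₁
  have hr2' : (r₂ : ℝ) ≠ 0 := ne_of_gt h₂
  have hrne : (r : ℝ) ≠ 0 := ne_of_gt rpos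
  have hRne : (R : ℝ) ≠ 0 := ne_of_gt Rpos
  subst hP hX hξ₁ hξ₂ hξ₃
  simp only [ip3, Prod.smul_mk, Prod.mk_sub_mk, smul_smul, inner_sub_right,
    inner_sub_left, real_inner_smul_right, real_inner_smul_left, ht1, ht2, ht1', ht2',
    hc1, hc2, hc3, hxx, hyy, ← ha, ← hb, ← hσ, inner_zero_right, smul_zero,
    mul_zero, zero_mul, sub_zero, zero_sub, add_zero, zero_add, Prod.mk.injEq]
  refine ⟨?_, ?_, ?_⟩
  · match_scalars
    · ring1
    · linear_combination (norm := (field_simp; ring1)) ((-a * r ^ 2 + a * r₁ ^ 2 - b * r₂ ^ 2) /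
          (r₂ ^ 2 * r ^ 2 * R ^ 2)) * hR2 -
        (a * (r ^ 2 + r₃ ^ 2) / (r₂ ^ 2 * r ^ 2 * R ^ 2)) * hr2
    · linear_combination (norm := (field_simp; ring1)) (σ * (a * r ^ 2 - a * r₁ ^ 2 + b * r₂ ^ 2) /
          (r₁ ^ 2 * r₂ ^ 2 * r ^ 2 * R ^ 2)) * hR2 +
        (σ * a * (r ^ 2 + r₃ ^ 2) / (r₁ ^ 2 * r₂ ^ 2 * r ^ 2 * R ^ 2)) * hr2
  · match_scalars
    · ring1
    · linear_combination (norm := (field_simp; ring1)) ((-b * r ^ 2 - a * r₁ ^ 2 + b * r₂ ^ 2) /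
          (r₁ ^ 2 * r ^ 2 * R ^ 2)) * hR2 -
        (b * (r ^ 2 + r₃ ^ 2) / (r₁ ^ 2 * r ^ 2 * R ^ 2)) * hr2
    · linear_combination (norm := (field_simp; ring1)) (σ * (b * r ^ 2 + a * r₁ ^ 2 - b * r₂ ^ 2) /
          (r₁ ^ 2 * r₂ ^ 2 * r ^ 2 * R ^ 2)) * hR2 +
        (σ * b * (r ^ 2 + r₃ ^ 2) / (r₁ ^ 2 * r₂ ^ 2 * r ^ 2 * R ^ 2)) * hr2
  · match_scalars
    · linear_combination hε2
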